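/- If f : I → ℝ is 2-convex (i.e., all fourth-order divided differences [x₁,x₂,x₃,x₄; f] are nonnegative, equivalently f''' ≥ 0 when f ∈ C³), then for all x < y in I: (1/4) f(x) + (3/4) f((x+2y)/3) ≤ (1/(y-x)) ∫ₓʸ f(t) dt ≤ (3/4) f((2x+y)/3) + (1/4) f(y). -/

import Mathlib

open Set MeasureTheory intervalIntegral

private lemma ibp3 (f f1 f2 f3 u u1 u2 : ℝ → ℝ) (e a b : ℝ) (hab : a ≤ b)
    (hu : ∀ t, HasDerivAt u (u1 t) t) (hu1 : ∀ t, HasDerivAt u1 (u2 t) t)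
    (hu2 : ∀ t, HasDerivAt u2 e t)
    (hc : ContinuousOn (fun t => u t * f2 t - u1 t * f1 t + u2 t * f t) (Set.Icc a b))
    (hd0 : ∀ t ∈ Set.Ioo a b, HasDerivAt f (f1 t) t)
    (hd1 : ∀ t ∈ Set.Ioo a b, HasDerivAt f1 (f2 t) t)
    (hd2 : ∀ t ∈ Set.Ioo a b, HasDerivAt f2 (f3 t) t)
    (hint : IntervalIntegrable (fun t => u t * f3 t + e * f t) volume a b) :
    ∫ t in a..b, (u t * f3 t + e * f t)
      = (u b * f2 b - u1 b * f1 b + u2 b * f b) - (u a * f2 a - u1 a * f1 a + u2 a * f a) := by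
  apply intervalIntegral.integral_eq_sub_of_hasDeriv_right_of_le hab hc ?_ hint
  intro t ht
  have H : HasDerivAt (fun t => u t * f2 t - u1 t * f1 t + u2 t * f t)
      (u t * f3 t + e * f t) t := by
    have h := (((hu t).mul (hd2 t ht)).sub ((hu1 t).mul (hd1 t ht))).add
      ((hu2 t).mul (hd0 t ht))
    exact h.congr_deriv (by ring)
  exact H.hasDerivWithinAt

set_option maxHeartbeats 1000000 in
theorem radau_two_convex (I : Set ℝ) (hI : Convex ℝ I) (f : ℝ → ℝ)
    (hf : ContDiffOn ℝ 3 f I)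
    (h3 : ∀ t ∈ I, 0 ≤ iteratedDerivWithin 3 f I t)
    (x y : ℝ) (hx : x ∈ I) (hy : y ∈ I) (hxy : x < y) :
    (1 / 4) * f x + (3 / 4) * f ((x + 2 * y) / 3) ≤ (1 / (y - x)) * (∫ t in x..y, f t) ∧
    (1 / (y - x)) * (∫ t in x..y, f t) ≤ (3 / 4) * f ((2 * x + y) / 3) + (1 / 4) * f y := by
  have hpos : (0:ℝ) < y - x := by linarith
  have hIccI : Set.Icc x y ⊆ I := hI.ordConnected.out hx hy
  have hIoo : Set.Ioo x y ⊆ interior I := by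
    rw [← interior_Icc]; exact interior_mono hIccI
  have hne : (interior I).Nonempty := ⟨(x+y)/2, hIoo ⟨by linarith, by linarith⟩⟩
  have hU : UniqueDiffOn ℝ I := uniqueDiffOn_convex hI hne
  set f1 := iteratedDerivWithin 1 f I with hf1
  set f2 := iteratedDerivWithin 2 f I with hf2
  set f3 := iteratedDerivWithin 3 f I with hf3
  have hderiv : ∀ (m : ℕ), (m : WithTop ℕ∞) < 3 → ∀ t ∈ Set.Ioo x y,
      HasDerivAt (iteratedDerivWithin m f I) (iteratedDerivWithin (m+1) f I t) t := by
    intro m hm t ht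
    have htI : t ∈ interior I := hIoo ht
    have hmem : I ∈ nhds t := mem_interior_iff_mem_nhds.mp htI
    have hdiff := hf.differentiableOn_iteratedDerivWithin hm hU
    have hdAt : DifferentiableAt ℝ (iteratedDerivWithin m f I) t :=
      (hdiff t (interior_subset htI)).differentiableAt hmem
    have heq : iteratedDerivWithin (m+1) f I t = deriv (iteratedDerivWithin m f I) t := by
      rw [iteratedDerivWithin_succ, derivWithin_of_mem_nhds hmem]
    rw [heq]
    exact hdAt.hasDerivAt
  have d0 : ∀ t ∈ Set.Ioo x y, HasDerivAt f (f1 t) t := by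
    intro t ht
    have := hderiv 0 (by norm_num) t ht
    simpa [iteratedDerivWithin_zero, hf1, iteratedDerivWithin_one] using this
  have d1 : ∀ t ∈ Set.Ioo x y, HasDerivAt f1 (f2 t) t := fun t ht =>
    hderiv 1 (by norm_num) t ht
  have d2 : ∀ t ∈ Set.Ioo x y, HasDerivAt f2 (f3 t) t := fun t ht =>
    hderiv 2 (by norm_num) t ht
  have hc0 : ContinuousOn f (Set.Icc x y) := hf.continuousOn.mono hIccI
  have hc1 : ContinuousOn f1 (Set.Icc x y) :=
    (hf.continuousOn_iteratedDerivWithin (by norm_num) hU).mono hIccI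
  have hc2 : ContinuousOn f2 (Set.Icc x y) :=
    (hf.continuousOn_iteratedDerivWithin (by norm_num) hU).mono hIccI
  have hc3 : ContinuousOn f3 (Set.Icc x y) :=
    (hf.continuousOn_iteratedDerivWithin (by norm_num) hU).mono hIccI
  have h3' : ∀ t ∈ Set.Icc x y, 0 ≤ f3 t := fun t ht => h3 t (hIccI ht)
  -- helper builders
  have contG : ∀ (u u1 u2 : ℝ → ℝ), Continuous u → Continuous u1 → Continuous u2 →
      ∀ a b : ℝ, Set.Icc a b ⊆ Set.Icc x y →
      ContinuousOn (fun t => u t * f2 t - u1 t * f1 t + u2 t * f t) (Set.Icc a b) := by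
    intro u u1 u2 hu hu1 hu2 a b hsub
    exact ((hu.continuousOn.mul (hc2.mono hsub)).sub
      (hu1.continuousOn.mul (hc1.mono hsub))).add (hu2.continuousOn.mul (hc0.mono hsub))
  have intf : ∀ a b : ℝ, a ≤ b → Set.Icc a b ⊆ Set.Icc x y →
      IntervalIntegrable f volume a b := by
    intro a b hab hsub
    apply ContinuousOn.intervalIntegrable
    rw [Set.uIcc_of_le hab]
    exact hc0.mono hsub
  have intK : ∀ (u : ℝ → ℝ), Continuous u → ∀ a b : ℝ, a ≤ b →
      Set.Icc a b ⊆ Set.Icc x y →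
      IntervalIntegrable (fun t => u t * f3 t) volume a b := by
    intro u hu a b hab hsub
    apply ContinuousOn.intervalIntegrable
    rw [Set.uIcc_of_le hab]
    exact hu.continuousOn.mul (hc3.mono hsub)
  have intG : ∀ (u : ℝ → ℝ) (e : ℝ), Continuous u → ∀ a b : ℝ, a ≤ b →
      Set.Icc a b ⊆ Set.Icc x y →
      IntervalIntegrable (fun t => u t * f3 t + e * f t) volume a b := by
    intro u e hu a b hab hsub
    apply ContinuousOn.intervalIntegrable
    rw [Set.uIcc_of_le hab]
    exact (hu.continuousOn.mul (hc3.mono hsub)).add (continuousOn_const.mul (hc0.mono hsub))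
  -- interval bounds
  have hxc : x < (2*x+y)/3 := by linarith
  have hcy : (2*x+y)/3 < y := by linarith
  have hxd : x < (x+2*y)/3 := by linarith
  have hdy : (x+2*y)/3 < y := by linarith
  have sub1 : Set.Icc x ((2*x+y)/3) ⊆ Set.Icc x y := Set.Icc_subset_Icc le_rfl hcy.le
  have sub2 : Set.Icc ((2*x+y)/3) y ⊆ Set.Icc x y := Set.Icc_subset_Icc hxc.le le_rfl
  have sub3 : Set.Icc x ((x+2*y)/3) ⊆ Set.Icc x y := Set.Icc_subset_Icc le_rfl hdy.le
  have sub4 : Set.Icc ((x+2*y)/3) y ⊆ Set.Icc x y := Set.Icc_subset_Icc hxd.le le_rfl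
  have osub1 : Set.Ioo x ((2*x+y)/3) ⊆ Set.Ioo x y := Set.Ioo_subset_Ioo le_rfl hcy.le
  have osub2 : Set.Ioo ((2*x+y)/3) y ⊆ Set.Ioo x y := Set.Ioo_subset_Ioo hxc.le le_rfl
  have osub3 : Set.Ioo x ((x+2*y)/3) ⊆ Set.Ioo x y := Set.Ioo_subset_Ioo le_rfl hdy.le
  have osub4 : Set.Ioo ((x+2*y)/3) y ⊆ Set.Ioo x y := Set.Ioo_subset_Ioo hxd.le le_rfl
  -- kernel derivative facts
  have huP : ∀ t : ℝ, HasDerivAt (fun s => (s-x)^3/6) ((t-x)^2/2) t := by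
    intro t
    have := (((hasDerivAt_id t).sub_const x).pow 3).div_const 6
    exact this.congr_deriv (by simp only [id_eq]; ring)
  have huP1 : ∀ t : ℝ, HasDerivAt (fun s => (s-x)^2/2) (t-x) t := by
    intro t
    have := (((hasDerivAt_id t).sub_const x).pow 2).div_const 2
    exact this.congr_deriv (by simp only [id_eq]; ring)
  have huP2 : ∀ t : ℝ, HasDerivAt (fun s : ℝ => s-x) 1 t := fun t =>
    (hasDerivAt_id t).sub_const x
  have huQ : ∀ t : ℝ, HasDerivAt (fun s => (y-x)*(s-y)^2/8 + (s-y)^3/6)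
      ((y-x)*(t-y)/4 + (t-y)^2/2) t := by
    intro t
    have := (((((hasDerivAt_id t).sub_const y).pow 2).const_mul (y-x)).div_const 8).add
      ((((hasDerivAt_id t).sub_const y).pow 3).div_const 6)
    exact this.congr_deriv (by simp only [id_eq]; ring)
  have huQ1 : ∀ t : ℝ, HasDerivAt (fun s => (y-x)*(s-y)/4 + (s-y)^2/2)
      ((y-x)/4 + (t-y)) t := by
    intro t
    have := ((((hasDerivAt_id t).sub_const y).const_mul (y-x)).div_const 4).add
      ((((hasDerivAt_id t).sub_const y).pow 2).div_const 2)
    exact this.congr_deriv (by simp only [id_eq]; ring)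
  have huQ2 : ∀ t : ℝ, HasDerivAt (fun s : ℝ => (y-x)/4 + (s-y)) 1 t := by
    intro t
    simpa using ((hasDerivAt_id t).sub_const y).const_add ((y-x)/4)
  have huR : ∀ t : ℝ, HasDerivAt (fun s => (y-x)*(s-x)^2/8 - (s-x)^3/6)
      ((y-x)*(t-x)/4 - (t-x)^2/2) t := by
    intro t
    have := (((((hasDerivAt_id t).sub_const x).pow 2).const_mul (y-x)).div_const 8).sub
      ((((hasDerivAt_id t).sub_const x).pow 3).div_const 6)
    exact this.congr_deriv (by simp only [id_eq]; ring)
  have huR1 : ∀ t : ℝ, HasDerivAt (fun s => (y-x)*(s-x)/4 - (s-x)^2/2)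
      ((y-x)/4 - (t-x)) t := by
    intro t
    have := ((((hasDerivAt_id t).sub_const x).const_mul (y-x)).div_const 4).sub
      ((((hasDerivAt_id t).sub_const x).pow 2).div_const 2)
    exact this.congr_deriv (by simp only [id_eq]; ring)
  have huR2 : ∀ t : ℝ, HasDerivAt (fun s : ℝ => (y-x)/4 - (s-x)) (-1) t := by
    intro t
    have := ((hasDerivAt_id t).sub_const x).const_sub ((y-x)/4)
    simpa using this
  have huS : ∀ t : ℝ, HasDerivAt (fun s => -((s-y)^3/6)) (-((t-y)^2/2)) t := by
    intro t
    have := ((((hasDerivAt_id t).sub_const y).pow 3).div_const 6).neg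
    exact this.congr_deriv (by simp only [id_eq]; ring)
  have huS1 : ∀ t : ℝ, HasDerivAt (fun s => -((s-y)^2/2)) (-(t-y)) t := by
    intro t
    have := ((((hasDerivAt_id t).sub_const y).pow 2).div_const 2).neg
    exact this.congr_deriv (by simp only [id_eq]; ring)
  have huS2 : ∀ t : ℝ, HasDerivAt (fun s : ℝ => -(s-y)) (-1) t := by
    intro t
    exact ((hasDerivAt_id t).sub_const y).neg
  -- FTC applications
  have F1 := ibp3 f f1 f2 f3 (fun s => (s-x)^3/6) (fun s => (s-x)^2/2) (fun s => s-x) 1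
    x ((2*x+y)/3) hxc.le huP huP1 huP2
    (contG _ _ _ (by fun_prop) (by fun_prop) (by fun_prop) _ _ sub1)
    (fun t ht => d0 t (osub1 ht)) (fun t ht => d1 t (osub1 ht)) (fun t ht => d2 t (osub1 ht))
    (intG _ 1 (by fun_prop) _ _ hxc.le sub1)
  have F2 := ibp3 f f1 f2 f3 (fun s => (y-x)*(s-y)^2/8 + (s-y)^3/6)
    (fun s => (y-x)*(s-y)/4 + (s-y)^2/2) (fun s => (y-x)/4 + (s-y)) 1
    ((2*x+y)/3) y hcy.le huQ huQ1 huQ2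
    (contG _ _ _ (by fun_prop) (by fun_prop) (by fun_prop) _ _ sub2)
    (fun t ht => d0 t (osub2 ht)) (fun t ht => d1 t (osub2 ht)) (fun t ht => d2 t (osub2 ht))
    (intG _ 1 (by fun_prop) _ _ hcy.le sub2)
  have F3 := ibp3 f f1 f2 f3 (fun s => (y-x)*(s-x)^2/8 - (s-x)^3/6)
    (fun s => (y-x)*(s-x)/4 - (s-x)^2/2) (fun s => (y-x)/4 - (s-x)) (-1)
    x ((x+2*y)/3) hxd.le huR huR1 huR2
    (contG _ _ _ (by fun_prop) (by fun_prop) (by fun_prop) _ _ sub3)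
    (fun t ht => d0 t (osub3 ht)) (fun t ht => d1 t (osub3 ht)) (fun t ht => d2 t (osub3 ht))
    (intG _ (-1) (by fun_prop) _ _ hxd.le sub3)
  have F4 := ibp3 f f1 f2 f3 (fun s => -((s-y)^3/6)) (fun s => -((s-y)^2/2)) (fun s => -(s-y))
    (-1) ((x+2*y)/3) y hdy.le huS huS1 huS2
    (contG _ _ _ (by fun_prop) (by fun_prop) (by fun_prop) _ _ sub4)
    (fun t ht => d0 t (osub4 ht)) (fun t ht => d1 t (osub4 ht)) (fun t ht => d2 t (osub4 ht))
    (intG _ (-1) (by fun_prop) _ _ hdy.le sub4)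
  -- split integrals
  have S1 : ∫ t in x..((2*x+y)/3), ((t-x)^3/6 * f3 t + 1 * f t)
      = (∫ t in x..((2*x+y)/3), (t-x)^3/6 * f3 t) + ∫ t in x..((2*x+y)/3), f t := by
    rw [← intervalIntegral.integral_add (intK _ (by fun_prop) _ _ hxc.le sub1)
      (intf _ _ hxc.le sub1)]
    exact intervalIntegral.integral_congr fun t _ => by ring
  have S2 : ∫ t in ((2*x+y)/3)..y, (((y-x)*(t-y)^2/8 + (t-y)^3/6) * f3 t + 1 * f t)
      = (∫ t in ((2*x+y)/3)..y, ((y-x)*(t-y)^2/8 + (t-y)^3/6) * f3 t)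
        + ∫ t in ((2*x+y)/3)..y, f t := by
    rw [← intervalIntegral.integral_add (intK _ (by fun_prop) _ _ hcy.le sub2)
      (intf _ _ hcy.le sub2)]
    exact intervalIntegral.integral_congr fun t _ => by ring
  have S3 : ∫ t in x..((x+2*y)/3), (((y-x)*(t-x)^2/8 - (t-x)^3/6) * f3 t + (-1) * f t)
      = (∫ t in x..((x+2*y)/3), ((y-x)*(t-x)^2/8 - (t-x)^3/6) * f3 t)
        - ∫ t in x..((x+2*y)/3), f t := by
    rw [← intervalIntegral.integral_sub (intK _ (by fun_prop) _ _ hxd.le sub3)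
      (intf _ _ hxd.le sub3)]
    exact intervalIntegral.integral_congr fun t _ => by ring
  have S4 : ∫ t in ((x+2*y)/3)..y, (-((t-y)^3/6) * f3 t + (-1) * f t)
      = (∫ t in ((x+2*y)/3)..y, -((t-y)^3/6) * f3 t) - ∫ t in ((x+2*y)/3)..y, f t := by
    rw [← intervalIntegral.integral_sub (intK _ (by fun_prop) _ _ hdy.le sub4)
      (intf _ _ hdy.le sub4)]
    exact intervalIntegral.integral_congr fun t _ => by ring
  rw [S1] at F1
  rw [S2] at F2
  rw [S3] at F3
  rw [S4] at F4
  -- glue the integrals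
  have hJ1 : (∫ t in x..((2*x+y)/3), f t) + ∫ t in ((2*x+y)/3)..y, f t = ∫ t in x..y, f t :=
    intervalIntegral.integral_add_adjacent_intervals (intf _ _ hxc.le sub1)
      (intf _ _ hcy.le sub2)
  have hJ2 : (∫ t in x..((x+2*y)/3), f t) + ∫ t in ((x+2*y)/3)..y, f t = ∫ t in x..y, f t :=
    intervalIntegral.integral_add_adjacent_intervals (intf _ _ hxd.le sub3)
      (intf _ _ hdy.le sub4)
  -- nonnegativity of kernel integrals
  have pos1 : 0 ≤ ∫ t in x..((2*x+y)/3), (t-x)^3/6 * f3 t := by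
    apply intervalIntegral.integral_nonneg hxc.le
    intro t ht
    have h1 : 0 ≤ t - x := by linarith [ht.1]
    exact mul_nonneg (by positivity) (h3' t (sub1 ht))
  have pos2 : 0 ≤ ∫ t in ((2*x+y)/3)..y, ((y-x)*(t-y)^2/8 + (t-y)^3/6) * f3 t := by
    apply intervalIntegral.integral_nonneg hcy.le
    intro t ht
    refine mul_nonneg ?_ (h3' t (sub2 ht))
    have h1 : (2*x+y)/3 ≤ t := ht.1
    have h2 : t ≤ y := ht.2
    have h4 : 0 ≤ (y-t)^2 * (4*t - y - 3*x) := mul_nonneg (sq_nonneg _) (by linarith)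
    have h5 : (y-x)*(t-y)^2/8 + (t-y)^3/6 = (y-t)^2 * (4*t - y - 3*x)/24 := by ring
    rw [h5]; linarith
  have pos3 : 0 ≤ ∫ t in x..((x+2*y)/3), ((y-x)*(t-x)^2/8 - (t-x)^3/6) * f3 t := by
    apply intervalIntegral.integral_nonneg hxd.le
    intro t ht
    refine mul_nonneg ?_ (h3' t (sub3 ht))
    have h1 : x ≤ t := ht.1
    have h2 : t ≤ (x+2*y)/3 := ht.2
    have h4 : 0 ≤ (t-x)^2 * (3*y + x - 4*t) := mul_nonneg (sq_nonneg _) (by linarith)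
    have h5 : (y-x)*(t-x)^2/8 - (t-x)^3/6 = (t-x)^2 * (3*y + x - 4*t)/24 := by ring
    rw [h5]; linarith
  have pos4 : 0 ≤ ∫ t in ((x+2*y)/3)..y, -((t-y)^3/6) * f3 t := by
    apply intervalIntegral.integral_nonneg hdy.le
    intro t ht
    have h1 : 0 ≤ y - t := by linarith [ht.2]
    refine mul_nonneg ?_ (h3' t (sub4 ht))
    have h5 : -((t-y)^3/6) = (y-t)^3/6 := by ring
    rw [h5]; positivity
  constructor
  · have key : (y - x) * (1 / 4 * f x + 3 / 4 * f ((x + 2 * y) / 3)) ≤ ∫ t in x..y, f t := by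
      linarith [F3, F4, hJ2, pos3, pos4]
    rw [show (1:ℝ)/(y-x) * (∫ t in x..y, f t) = (∫ t in x..y, f t)/(y-x) from one_div_mul_eq_div _ _, le_div_iff₀ hpos]
    nlinarith [key]
  · have key : (∫ t in x..y, f t) ≤ (y - x) * (3 / 4 * f ((2 * x + y) / 3) + 1 / 4 * f y) := by
      linarith [F1, F2, hJ1, pos1, pos2]
    rw [show (1:ℝ)/(y-x) * (∫ t in x..y, f t) = (∫ t in x..y, f t)/(y-x) from one_div_mul_eq_div _ _, div_le_iff₀ hpos]
    nlinarith [key]
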